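/- Under the setup, suppose Z is conditionally independent of (D₁, D₀) given W and P(Z = 1, W = w) > 0 for a given w ∈ {0,1}. Then P(D = 0 | Z = 1, W = w) = P(NT | W = w), i.e., the probability of being a never taker given W = w equals the observed probability of non-treatment among those with Z = 1 and W = w. -/

import Mathlib

open MeasureTheory ProbabilityTheory

/-- `pr μ A` is the probability of the event `A`, as a real number. -/
noncomputable def pr {Ω : Type*} [MeasurableSpace Ω] (μ : Measure Ω) (A : Set Ω) : ℝ :=
  (μ A).toReal

/-- `prCond μ A B` is the conditional probability `P(A | B) = P(A ∩ B) / P(B)`. -/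
noncomputable def prCond {Ω : Type*} [MeasurableSpace Ω] (μ : Measure Ω) (A B : Set Ω) : ℝ :=
  pr μ (A ∩ B) / pr μ B

/-- `cexp μ A f` is the conditional expectation `E[f | A]` of `f` given the event `A`. -/
noncomputable def cexp {Ω : Type*} [MeasurableSpace Ω] (μ : Measure Ω) (A : Set Ω)
    (f : Ω → ℝ) : ℝ :=
  ∫ ω, f ω ∂(μ[|A])

/-- The event `{ω | f ω = c}`. -/
def evEq {Ω : Type*} (f : Ω → ℝ) (c : ℝ) : Set Ω := {ω | f ω = c}

/-- Always takers: `D₁ = D₀ = 1`. -/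
def ATset {Ω : Type*} (D1 D0 : Ω → ℝ) : Set Ω := {ω | D1 ω = 1 ∧ D0 ω = 1}

/-- Never takers: `D₁ = D₀ = 0`. -/
def NTset {Ω : Type*} (D1 D0 : Ω → ℝ) : Set Ω := {ω | D1 ω = 0 ∧ D0 ω = 0}

/-- Compliers: `D₁ = 1`, `D₀ = 0`. -/
def CPset {Ω : Type*} (D1 D0 : Ω → ℝ) : Set Ω := {ω | D1 ω = 1 ∧ D0 ω = 0}

/-- identification of the probability of never takers. -/
theorem never_takers_identified
    {Ω : Type*} [MeasurableSpace Ω] (μ : Measure Ω) [IsProbabilityMeasure μ]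
    (D1 D0 Z W : Ω → ℝ)
    (hD1v : ∀ ω, D1 ω = 0 ∨ D1 ω = 1) (hD0v : ∀ ω, D0 ω = 0 ∨ D0 ω = 1)
    (hZv : ∀ ω, Z ω = 0 ∨ Z ω = 1) (hWv : ∀ ω, W ω = 0 ∨ W ω = 1)
    (hD1m : Measurable D1) (hD0m : Measurable D0) (hZm : Measurable Z) (hWm : Measurable W)
    (D : Ω → ℝ) (hD : ∀ ω, D ω = D1 ω * Z ω + D0 ω * (1 - Z ω))
    (hmono : ∀ᵐ ω ∂μ, D0 ω ≤ D1 ω)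
    (hCI2 : ∀ w' : ℝ, IndepFun Z (fun ω => (D1 ω, D0 ω)) (μ[|evEq W w']))
    (w : ℝ) (hw : w = 0 ∨ w = 1)
    (hpos : 0 < pr μ (evEq Z 1 ∩ evEq W w)) :
    prCond μ (evEq D 0) (evEq Z 1 ∩ evEq W w) = prCond μ (NTset D1 D0) (evEq W w) := by
  classical
  set B := evEq Z 1 with hB
  set Ww := evEq W w with hWw
  have hBm : MeasurableSet B := hZm (measurableSet_singleton 1)
  have hWwm : MeasurableSet Ww := hWm (measurableSet_singleton w)
  have hNTm : MeasurableSet (NTset D1 D0) :=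
    (hD1m (measurableSet_singleton 0)).inter (hD0m (measurableSet_singleton 0))
  -- a.e. set equality: {D = 0} ∩ (B ∩ Ww) = NT ∩ (B ∩ Ww)
  have hae : (evEq D 0 ∩ (B ∩ Ww) : Set Ω) =ᵐ[μ] (NTset D1 D0 ∩ (B ∩ Ww) : Set Ω) := by
    filter_upwards [hmono] with ω hω
    simp only [Set.mem_inter_iff, evEq, NTset, Set.mem_setOf_eq, eq_iff_iff, hB, hWw]
    constructor
    · rintro ⟨hd, hz, hw'⟩
      have hd0 : D ω = 0 := hd
      have hz1 : Z ω = 1 := hz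
      have heq := hD ω
      rw [hz1, hd0] at heq
      have h1 : D1 ω = 0 := by linarith
      have h0 : D0 ω = 0 := by
        rcases hD0v ω with h | h
        · exact h
        · linarith
      exact ⟨⟨h1, h0⟩, hz, hw'⟩
    · rintro ⟨⟨h1, h0⟩, hz, hw'⟩
      have hz1 : Z ω = 1 := hz
      refine ⟨?_, hz, hw'⟩
      show D ω = 0
      rw [hD, hz1, h1]; ring
  have hmeq : μ (evEq D 0 ∩ (B ∩ Ww)) = μ (NTset D1 D0 ∩ (B ∩ Ww)) := measure_congr hae
  -- positivity
  have hBWpos : 0 < μ (B ∩ Ww) := by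
    by_contra h
    push_neg at h
    have : μ (B ∩ Ww) = 0 := le_antisymm h zero_le
    rw [pr, this] at hpos; simp at hpos
  have hWpos : 0 < μ Ww := lt_of_lt_of_le hBWpos (measure_mono Set.inter_subset_right)
  have hWne : μ Ww ≠ 0 := hWpos.ne'
  have hWfin : μ Ww ≠ ⊤ := measure_ne_top μ _
  -- independence under μ[|Ww]
  have hind := (hCI2 w).measure_inter_preimage_eq_mul (s := {1})
    (t := {((0 : ℝ), (0 : ℝ))}) (measurableSet_singleton 1) (measurableSet_singleton _)
  have hpre : (fun ω => (D1 ω, D0 ω)) ⁻¹' {((0 : ℝ), (0 : ℝ))} = NTset D1 D0 := by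
    ext ω; simp [NTset, Prod.ext_iff]
  have hZpre : Z ⁻¹' ({1} : Set ℝ) = B := rfl
  rw [hpre, hZpre, cond_apply hWwm, cond_apply hWwm, cond_apply hWwm] at hind
  have e1 : Ww ∩ (B ∩ NTset D1 D0) = NTset D1 D0 ∩ (B ∩ Ww) := by
    ext ω; simp only [Set.mem_inter_iff]; tauto
  have e2 : Ww ∩ B = B ∩ Ww := Set.inter_comm _ _
  have e3 : Ww ∩ NTset D1 D0 = NTset D1 D0 ∩ Ww := Set.inter_comm _ _
  rw [e1, e2, e3] at hind
  -- convert to reals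
  have hR := congrArg ENNReal.toReal hind
  rw [ENNReal.toReal_mul, ENNReal.toReal_mul, ENNReal.toReal_mul, ENNReal.toReal_mul,
    ENNReal.toReal_inv] at hR
  have hWr : (0:ℝ) < (μ Ww).toReal := ENNReal.toReal_pos hWne hWfin
  have key : (μ (NTset D1 D0 ∩ (B ∩ Ww))).toReal * (μ Ww).toReal
      = (μ (B ∩ Ww)).toReal * (μ (NTset D1 D0 ∩ Ww)).toReal := by
    field_simp at hR
    nlinarith [hR]
  -- final computation
  unfold prCond pr
  rw [hmeq]
  have hBWr : (0:ℝ) < (μ (B ∩ Ww)).toReal := by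
    simpa [pr] using hpos
  have hWr : (0:ℝ) < (μ Ww).toReal := ENNReal.toReal_pos hWne hWfin
  field_simp
  linarith [key]
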